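/- Let K ≥ 2, let X be uniformly distributed on 𝒳={1,…,K}, let ρ be the Hamming distortion (ρ(x,x̂)=0 if x=x̂ and 1 otherwise), and let Q:(0,∞)→ℝ be convex with lim_{t→0+} t·Q(1/t)=0. Then for every D with 0 < D ≤ (K−1)/K, R^Q(D) := inf{ I^Q(X;X̂) : conditional pmfs p(x̂|x) with Σ_{x,x̂}(1/K)p(x̂|x)ρ(x,x̂) ≤ D } = (1−D)·Q( 1/(K(1−D)) ) + D·Q( (K−1)/(K·D) ). -/

import Mathlib

open Finset Filter Set


/-- Perspective of `Q`, extended by `0` at `p ≤ 0`. -/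
noncomputable def pfQ (Q : ℝ → ℝ) (p t : ℝ) : ℝ := if 0 < p then p * Q (t / p) else 0

lemma pfQ_of_pos (Q : ℝ → ℝ) {p : ℝ} (hp : 0 < p) (t : ℝ) :
    pfQ Q p t = p * Q (t / p) := if_pos hp

lemma pfQ_of_nonpos (Q : ℝ → ℝ) {p : ℝ} (hp : ¬ 0 < p) (t : ℝ) :
    pfQ Q p t = 0 := if_neg hp

lemma pfQ_smul (Q : ℝ → ℝ) {c : ℝ} (hc : 0 < c) (p t : ℝ) :
    pfQ Q (c * p) (c * t) = c * pfQ Q p t := by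
  unfold pfQ
  by_cases hp : 0 < p
  · rw [if_pos (by positivity), if_pos hp, mul_div_mul_left _ _ hc.ne']; ring
  · rw [if_neg (fun h => hp (by nlinarith)), if_neg hp, mul_zero]

lemma two_pos_sub {Q : ℝ → ℝ} (hQ : ConvexOn ℝ (Set.Ioi (0:ℝ)) Q)
    {p1 p2 t1 t2 : ℝ} (hp1 : 0 < p1) (hp2 : 0 < p2) (ht1 : 0 < t1) (ht2 : 0 < t2) :
    (p1 + p2) * Q ((t1 + t2) / (p1 + p2)) ≤ p1 * Q (t1 / p1) + p2 * Q (t2 / p2) := by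
  have hp : 0 < p1 + p2 := by linarith
  have key := hQ.2 (Set.mem_Ioi.2 (div_pos ht1 hp1)) (Set.mem_Ioi.2 (div_pos ht2 hp2))
    (le_of_lt (div_pos hp1 hp)) (le_of_lt (div_pos hp2 hp))
    (by rw [← add_div, div_self hp.ne'])
  have harg : (p1/(p1+p2)) • (t1/p1) + (p2/(p1+p2)) • (t2/p2) = (t1+t2)/(p1+p2) := by
    simp only [smul_eq_mul]; field_simp; try ring
  rw [harg] at key
  have h2 := mul_le_mul_of_nonneg_left key hp.le
  calc (p1+p2) * Q ((t1+t2)/(p1+p2))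
      ≤ (p1+p2) * ((p1/(p1+p2)) • Q (t1/p1) + (p2/(p1+p2)) • Q (t2/p2)) := h2
    _ = p1 * Q (t1/p1) + p2 * Q (t2/p2) := by simp only [smul_eq_mul]; field_simp; try ring

lemma sum_pos_sub {Q : ℝ → ℝ} (hQ : ConvexOn ℝ (Set.Ioi (0:ℝ)) Q)
    {ι : Type*} (s : Finset ι) (hs : s.Nonempty)
    (p t : ι → ℝ) (hp : ∀ i ∈ s, 0 < p i) (ht : ∀ i ∈ s, 0 < t i) :
    (∑ i ∈ s, p i) * Q ((∑ i ∈ s, t i) / (∑ i ∈ s, p i)) ≤ ∑ i ∈ s, p i * Q (t i / p i) := by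
  induction s using Finset.cons_induction with
  | empty => exact absurd hs (by simp)
  | cons a s ha ih =>
    rcases s.eq_empty_or_nonempty with rfl | hsne
    · simp
    · have hp' : ∀ i ∈ s, 0 < p i := fun i hi => hp i (Finset.mem_cons_of_mem hi)
      have ht' : ∀ i ∈ s, 0 < t i := fun i hi => ht i (Finset.mem_cons_of_mem hi)
      have hPs : 0 < ∑ i ∈ s, p i := Finset.sum_pos hp' hsne
      have hTs : 0 < ∑ i ∈ s, t i := Finset.sum_pos ht' hsne
      rw [Finset.sum_cons, Finset.sum_cons, Finset.sum_cons]
      calc (p a + ∑ i ∈ s, p i) * Q ((t a + ∑ i ∈ s, t i) / (p a + ∑ i ∈ s, p i))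
          ≤ p a * Q (t a / p a)
            + (∑ i ∈ s, p i) * Q ((∑ i ∈ s, t i) / (∑ i ∈ s, p i)) :=
            two_pos_sub hQ (hp a (Finset.mem_cons_self a s)) hPs
              (ht a (Finset.mem_cons_self a s)) hTs
        _ ≤ p a * Q (t a / p a) + ∑ i ∈ s, p i * Q (t i / p i) :=
            add_le_add (le_refl _) (ih hsne hp' ht')

lemma tendsto_pers {Q : ℝ → ℝ} (hQ : ConvexOn ℝ (Set.Ioi (0:ℝ)) Q)
    {a b : ℝ} (ha : 0 < a) (hb : 0 < b) :
    Tendsto (fun ε : ℝ => (a + ε * b) * Q (b / (a + ε * b)))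
      (nhdsWithin 0 (Set.Ioi 0)) (nhds (a * Q (b / a))) := by
  have h1 : Tendsto (fun ε : ℝ => a + ε * b) (nhdsWithin 0 (Set.Ioi 0)) (nhds a) := by
    have : Tendsto (fun ε : ℝ => a + ε * b) (nhds 0) (nhds (a + 0 * b)) :=
      (continuous_const.add (continuous_id.mul continuous_const)).tendsto 0
    simpa using this.mono_left nhdsWithin_le_nhds
  have h2 : Tendsto (fun ε : ℝ => b / (a + ε * b)) (nhdsWithin 0 (Set.Ioi 0)) (nhds (b / a)) :=
    tendsto_const_nhds.div h1 ha.ne'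
  have hQat : ContinuousAt Q (b / a) :=
    (hQ.continuousOn isOpen_Ioi).continuousAt (Ioi_mem_nhds (div_pos hb ha))
  exact h1.mul (hQat.tendsto.comp h2)

lemma tendsto_pers_zero {Q : ℝ → ℝ}
    (hQlim : Tendsto (fun t : ℝ => t * Q (1 / t)) (nhdsWithin 0 (Set.Ioi 0)) (nhds 0))
    {b : ℝ} (hb : 0 < b) :
    Tendsto (fun ε : ℝ => (ε * b) * Q (b / (ε * b)))
      (nhdsWithin 0 (Set.Ioi 0)) (nhds 0) := by
  have h1 : Tendsto (fun ε : ℝ => b * (ε * Q (1 / ε))) (nhdsWithin 0 (Set.Ioi 0)) (nhds 0) := by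
    simpa using hQlim.const_mul b
  refine h1.congr' ?_
  filter_upwards [self_mem_nhdsWithin] with ε (hε : 0 < ε)
  have : b / (ε * b) = 1 / ε := by
    rw [mul_comm, ← div_div, div_self hb.ne']
  rw [this]; ring

lemma sum_nonneg_sub {Q : ℝ → ℝ} (hQ : ConvexOn ℝ (Set.Ioi (0:ℝ)) Q)
    (hQlim : Tendsto (fun t : ℝ => t * Q (1 / t)) (nhdsWithin 0 (Set.Ioi 0)) (nhds 0))
    {ι : Type*} (s : Finset ι) (p t : ι → ℝ)
    (hp : ∀ i ∈ s, 0 ≤ p i) (ht : ∀ i ∈ s, 0 < t i) (hP : 0 < ∑ i ∈ s, p i) :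
    (∑ i ∈ s, p i) * Q ((∑ i ∈ s, t i) / (∑ i ∈ s, p i)) ≤ ∑ i ∈ s, pfQ Q (p i) (t i) := by
  have hs : s.Nonempty := by
    rcases s.eq_empty_or_nonempty with rfl | h
    · simp at hP
    · exact h
  set P := ∑ i ∈ s, p i with hPdef
  set T := ∑ i ∈ s, t i with hTdef
  have hT : 0 < T := Finset.sum_pos ht hs
  -- limit of LHS-family
  have hG : Tendsto (fun ε : ℝ => (P + ε * T) * Q (T / (P + ε * T)))
      (nhdsWithin 0 (Set.Ioi 0)) (nhds (P * Q (T / P))) := tendsto_pers hQ hP hT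
  -- limit of RHS-family
  have hF : Tendsto (fun ε : ℝ => ∑ i ∈ s, (p i + ε * t i) * Q (t i / (p i + ε * t i)))
      (nhdsWithin 0 (Set.Ioi 0)) (nhds (∑ i ∈ s, pfQ Q (p i) (t i))) := by
    refine tendsto_finset_sum s (fun i hi => ?_)
    rcases (hp i hi).lt_or_eq with hpi | hpi
    · rw [pfQ_of_pos Q hpi]
      exact tendsto_pers hQ hpi (ht i hi)
    · rw [pfQ_of_nonpos Q (by rw [← hpi]; exact lt_irrefl 0)]
      have := tendsto_pers_zero hQlim (ht i hi)
      refine this.congr (fun ε => ?_)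
      rw [← hpi, zero_add]
  refine le_of_tendsto_of_tendsto hG hF ?_
  filter_upwards [self_mem_nhdsWithin] with ε (hε : 0 < ε)
  have hsum : ∑ i ∈ s, (p i + ε * t i) = P + ε * T := by
    rw [Finset.sum_add_distrib, ← Finset.mul_sum]
  have hsumt : T = ∑ i ∈ s, t i := hTdef
  have := sum_pos_sub hQ s hs (fun i => p i + ε * t i) t
    (fun i hi => by have := hp i hi; have := ht i hi; positivity)
    ht
  rw [hsum] at this
  simpa using this

lemma two_nonneg_sub {Q : ℝ → ℝ} (hQ : ConvexOn ℝ (Set.Ioi (0:ℝ)) Q)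
    (hQlim : Tendsto (fun t : ℝ => t * Q (1 / t)) (nhdsWithin 0 (Set.Ioi 0)) (nhds 0))
    {p1 p2 t1 t2 : ℝ} (hp1 : 0 ≤ p1) (hp2 : 0 ≤ p2) (ht1 : 0 < t1) (ht2 : 0 < t2)
    (hP : 0 < p1 + p2) :
    (p1 + p2) * Q ((t1 + t2) / (p1 + p2)) ≤ pfQ Q p1 t1 + pfQ Q p2 t2 := by
  have := sum_nonneg_sub hQ hQlim (Finset.univ : Finset (Fin 2)) ![p1, p2] ![t1, t2]
    (fun i _ => by fin_cases i <;> simpa) (fun i _ => by fin_cases i <;> simpa)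
    (by rw [Fin.sum_univ_two]; simpa)
  simpa [Fin.sum_univ_two] using this

lemma pfQ_two_sub {Q : ℝ → ℝ} (hQ : ConvexOn ℝ (Set.Ioi (0:ℝ)) Q)
    (hQlim : Tendsto (fun t : ℝ => t * Q (1 / t)) (nhdsWithin 0 (Set.Ioi 0)) (nhds 0))
    {p1 p2 t1 t2 : ℝ} (hp1 : 0 ≤ p1) (hp2 : 0 ≤ p2) (ht1 : 0 < t1) (ht2 : 0 < t2) :
    pfQ Q (p1 + p2) (t1 + t2) ≤ pfQ Q p1 t1 + pfQ Q p2 t2 := by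
  rcases lt_or_eq_of_le (by positivity : (0:ℝ) ≤ p1 + p2) with hP | hP
  · rw [pfQ_of_pos Q hP]
    exact two_nonneg_sub hQ hQlim hp1 hp2 ht1 ht2 hP
  · have h1 : p1 = 0 := by linarith [hp1, hp2]
    have h2 : p2 = 0 := by linarith [hp1, hp2]
    rw [h1, h2, pfQ_of_nonpos Q (by norm_num), pfQ_of_nonpos Q (by norm_num),
      pfQ_of_nonpos Q (by norm_num)]
    norm_num

/-- `g(d) = pfQ Q (1-d) (1/k) + pfQ Q d ((k-1)/k)` is antitone on `[0, (k-1)/k]`. -/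
lemma g_mono {Q : ℝ → ℝ} (hQ : ConvexOn ℝ (Set.Ioi (0:ℝ)) Q)
    (hQlim : Tendsto (fun t : ℝ => t * Q (1 / t)) (nhdsWithin 0 (Set.Ioi 0)) (nhds 0))
    {k d e : ℝ} (hk : 2 ≤ k)
    (hd0 : 0 ≤ d) (hde : d ≤ e) (he : e ≤ (k - 1) / k) :
    pfQ Q (1 - e) (1 / k) + pfQ Q e ((k - 1) / k)
      ≤ pfQ Q (1 - d) (1 / k) + pfQ Q d ((k - 1) / k) := by
  have hk0 : (0:ℝ) < k := by linarith
  have hDm : (0:ℝ) < (k - 1) / k := div_pos (by linarith) hk0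
  have hDm1 : (k - 1) / k < 1 := by rw [div_lt_one hk0]; linarith
  have htk : (0:ℝ) < 1 / k := by positivity
  set Dm : ℝ := (k - 1) / k with hDmdef
  -- g d ≥ Q 1 for 0 ≤ d ≤ 1
  have gQ1 : ∀ x : ℝ, 0 ≤ x → x ≤ 1 → Q 1 ≤ pfQ Q (1 - x) (1 / k) + pfQ Q x Dm := by
    intro x hx0 hx1
    have h := pfQ_two_sub hQ hQlim (by linarith : (0:ℝ) ≤ 1 - x) hx0 htk hDm
    have h1 : 1 - x + x = 1 := by ring
    have h2 : 1 / k + Dm = 1 := by rw [hDmdef]; field_simp; ring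
    rw [h1, h2, pfQ_of_pos Q one_pos, div_one, one_mul] at h
    exact h
  have gDm : pfQ Q (1 - Dm) (1 / k) + pfQ Q Dm Dm = Q 1 := by
    have h1 : 1 - Dm = 1 / k := by rw [hDmdef]; field_simp; ring
    rw [h1, pfQ_of_pos Q htk, pfQ_of_pos Q hDm, div_self htk.ne', div_self hDm.ne']
    have h2 : 1 / k + Dm = 1 := by rw [hDmdef]; field_simp; ring
    linear_combination Q 1 * h2
  have he1 : e < 1 := lt_of_le_of_lt he hDm1
  rcases eq_or_lt_of_le hde with rfl | hdlt
  · exact le_rfl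
  rcases eq_or_lt_of_le he with rfl | helt
  · rw [gDm]
    exact gQ1 d hd0 (by linarith)
  -- d < e < Dm
  set lam : ℝ := (Dm - e) / (Dm - d) with hlam
  set mu : ℝ := (e - d) / (Dm - d) with hmu
  have hdDm : d < Dm := lt_trans hdlt helt
  have hden : 0 < Dm - d := by linarith
  have hlam0 : 0 < lam := by apply div_pos <;> linarith
  have hmu0 : 0 < mu := by apply div_pos <;> linarith
  have hlm : lam + mu = 1 := by rw [hlam, hmu]; field_simp; ring
  have hcomb : lam * d + mu * Dm = e := by rw [hlam, hmu]; field_simp; ring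
  have h1 : pfQ Q (1 - e) (1 / k) ≤ lam * pfQ Q (1 - d) (1 / k) + mu * pfQ Q (1 - Dm) (1 / k) := by
    have key := pfQ_two_sub hQ hQlim
      (by nlinarith : (0:ℝ) ≤ lam * (1 - d)) (by nlinarith : (0:ℝ) ≤ mu * (1 - Dm))
      (by positivity : (0:ℝ) < lam * (1 / k)) (by positivity : (0:ℝ) < mu * (1 / k))
    have e1 : lam * (1 - d) + mu * (1 - Dm) = 1 - e := by
      have : lam * (1 - d) + mu * (1 - Dm) = (lam + mu) - (lam * d + mu * Dm) := by ring
      rw [this, hlm, hcomb]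
    have e2 : lam * (1 / k) + mu * (1 / k) = 1 / k := by
      rw [← add_mul, hlm, one_mul]
    rw [e1, e2, pfQ_smul Q hlam0, pfQ_smul Q hmu0] at key
    exact key
  have h2 : pfQ Q e Dm ≤ lam * pfQ Q d Dm + mu * pfQ Q Dm Dm := by
    have key := pfQ_two_sub hQ hQlim
      (by nlinarith : (0:ℝ) ≤ lam * d) (by nlinarith : (0:ℝ) ≤ mu * Dm)
      (by positivity : (0:ℝ) < lam * Dm) (by positivity : (0:ℝ) < mu * Dm)
    have e1 : lam * d + mu * Dm = e := hcomb
    have e2 : lam * Dm + mu * Dm = Dm := by rw [← add_mul, hlm, one_mul]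
    rw [e1, e2, pfQ_smul Q hlam0, pfQ_smul Q hmu0] at key
    exact key
  have hQ1 : Q 1 ≤ pfQ Q (1 - d) (1 / k) + pfQ Q d Dm := gQ1 d hd0 (by linarith)
  have hgDm' : pfQ Q (1 - Dm) (1 / k) + pfQ Q Dm Dm = Q 1 := gDm
  have h3 := mul_le_mul_of_nonneg_left hQ1 hmu0.le
  have h4 : mu * (pfQ Q (1 - Dm) (1 / k) + pfQ Q Dm Dm) = mu * Q 1 := by rw [hgDm']
  have h5 : lam * (pfQ Q (1 - d) (1 / k) + pfQ Q d Dm)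
      + mu * (pfQ Q (1 - d) (1 / k) + pfQ Q d Dm)
      = pfQ Q (1 - d) (1 / k) + pfQ Q d Dm := by rw [← add_mul, hlm, one_mul]
  nlinarith [h1, h2, h3, h4, h5]

set_option maxHeartbeats 2000000 in
/-- Closed form of the generalized rate–distortion function of a uniform source
w.r.t. the Hamming distortion measure:
`R^Q(D) = (1-D)·Q(1/(K(1-D))) + D·Q((K-1)/(KD))`. -/
theorem stmt_11 (K : ℕ) (hK : 2 ≤ K)
    (Q : ℝ → ℝ) (hQ : ConvexOn ℝ (Set.Ioi (0:ℝ)) Q)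
    (hQlim : Filter.Tendsto (fun t : ℝ => t * Q (1 / t))
      (nhdsWithin 0 (Set.Ioi 0)) (nhds 0))
    (D : ℝ) (hD0 : 0 < D) (hD1 : D ≤ ((K:ℝ) - 1)/(K:ℝ)) :
    sInf { r : ℝ | ∃ pc : Fin K → Fin K → ℝ,
        (∀ x xh, 0 ≤ pc x xh) ∧ (∀ x, ∑ xh, pc x xh = 1) ∧
        (∑ x, ∑ xh, (1/(K:ℝ)) * pc x xh * (if x = xh then 0 else 1) ≤ D) ∧
        r = ∑ x, ∑ xh ∈ Finset.univ.filter (fun xh => 0 < pc x xh),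
            (1/(K:ℝ)) * pc x xh * Q ((∑ x', (1/(K:ℝ)) * pc x' xh) / pc x xh) }
      = (1 - D) * Q (1/((K:ℝ) * (1 - D))) + D * Q (((K:ℝ) - 1)/((K:ℝ) * D)) := by
  have hk2 : (2:ℝ) ≤ (K:ℝ) := by exact_mod_cast hK
  set k : ℝ := (K:ℝ) with hkdef
  have hk0 : (0:ℝ) < k := by linarith
  have hkm1 : (0:ℝ) < k - 1 := by linarith
  have hD1' : D < 1 := lt_of_le_of_lt hD1 (by rw [div_lt_one hk0]; linarith)
  have h1D : (0:ℝ) < 1 - D := by linarith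
  have hinvk : (0:ℝ) < 1/k := by positivity
  set c : ℝ := (1 - D) * Q (1/(k * (1 - D))) + D * Q ((k - 1)/(k * D)) with hcdef
  have harg1 : (1/k)/(1-D) = 1/(k*(1-D)) := div_div 1 k (1-D)
  have harg2 : (1/k)/(D/(k-1)) = (k-1)/(k*D) := by
    rw [div_div_eq_mul_div, div_mul_eq_mul_div, one_mul, div_div]
  -- membership
  have hmem : c ∈ { r : ℝ | ∃ pc : Fin K → Fin K → ℝ,
        (∀ x xh, 0 ≤ pc x xh) ∧ (∀ x, ∑ xh, pc x xh = 1) ∧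
        (∑ x, ∑ xh, (1/k) * pc x xh * (if x = xh then 0 else 1) ≤ D) ∧
        r = ∑ x, ∑ xh ∈ Finset.univ.filter (fun xh => 0 < pc x xh),
            (1/k) * pc x xh * Q ((∑ x', (1/k) * pc x' xh) / pc x xh) } := by
    refine ⟨fun x xh => if x = xh then 1 - D else D/(k-1), ?_, ?_, ?_, ?_⟩
    · intro x xh; dsimp only; split
      · linarith
      · positivity
    · intro x; dsimp only
      have hterm : ∀ xh : Fin K, (if x = xh then 1 - D else D/(k-1))
          = D/(k-1) + (if x = xh then 1 - D - D/(k-1) else 0) := by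
        intro xh; split <;> ring
      rw [Finset.sum_congr rfl (fun xh _ => hterm xh), Finset.sum_add_distrib,
        Finset.sum_const, Finset.sum_ite_eq, if_pos (Finset.mem_univ x),
        Finset.card_univ, Fintype.card_fin, nsmul_eq_mul]
      field_simp
      rw [← hkdef]
      ring
    · dsimp only
      have hterm : ∀ x xh : Fin K, 1/k * (if x = xh then 1 - D else D/(k-1))
            * (if x = xh then (0:ℝ) else 1)
          = (1/k)*(D/(k-1)) - (if x = xh then (1/k)*(D/(k-1)) else 0) := by
        intro x xh; split <;> ring
      have hrow : ∀ x : Fin K, ∑ xh, (1/k * (if x = xh then 1 - D else D/(k-1))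
            * (if x = xh then (0:ℝ) else 1)) = k * ((1/k)*(D/(k-1))) - (1/k)*(D/(k-1)) := by
        intro x
        rw [Finset.sum_congr rfl (fun xh _ => hterm x xh), Finset.sum_sub_distrib,
          Finset.sum_const, Finset.sum_ite_eq, if_pos (Finset.mem_univ x),
          Finset.card_univ, Fintype.card_fin, nsmul_eq_mul]
      rw [Finset.sum_congr rfl (fun x _ => hrow x), Finset.sum_const,
        Finset.card_univ, Fintype.card_fin, nsmul_eq_mul]
      have : k * (k * (1 / k * (D / (k - 1))) - 1 / k * (D / (k - 1))) = D := by
        field_simp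
      rw [this]
    · dsimp only
      have hfil : ∀ x : Fin K, Finset.univ.filter
          (fun xh => 0 < (if x = xh then 1 - D else D/(k-1))) = Finset.univ := by
        intro x
        refine Finset.filter_true_of_mem (fun xh _ => ?_)
        split
        · linarith
        · positivity
      have hq : ∀ xh : Fin K, (∑ x' : Fin K, (1/k) * (if x' = xh then 1 - D else D/(k-1)))
          = 1/k := by
        intro xh
        have hterm : ∀ x' : Fin K, (1/k) * (if x' = xh then 1 - D else D/(k-1))
            = (1/k)*(D/(k-1)) + (if x' = xh then (1/k)*(1 - D - D/(k-1)) else 0) := by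
          intro x'; split <;> ring
        rw [Finset.sum_congr rfl (fun x' _ => hterm x'), Finset.sum_add_distrib,
          Finset.sum_const, Finset.sum_ite_eq', if_pos (Finset.mem_univ xh),
          Finset.card_univ, Fintype.card_fin, nsmul_eq_mul]
        field_simp
        ring
      have key : ∀ x : Fin K, (∑ xh ∈ Finset.univ.filter
            (fun xh => 0 < (if x = xh then 1 - D else D/(k-1))),
            (1/k) * (if x = xh then 1 - D else D/(k-1))
              * Q ((∑ x', (1/k) * (if x' = xh then 1 - D else D/(k-1)))
                  / (if x = xh then 1 - D else D/(k-1))))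
          = (1/k) * c := by
        intro x
        rw [hfil x]
        have hterm : ∀ xh : Fin K, (1/k) * (if x = xh then 1 - D else D/(k-1))
              * Q ((∑ x', (1/k) * (if x' = xh then 1 - D else D/(k-1)))
                  / (if x = xh then 1 - D else D/(k-1)))
            = (1/k)*(D/(k-1))*Q ((k-1)/(k*D))
              + (if x = xh then (1/k)*(1-D)*Q (1/(k*(1-D)))
                  - (1/k)*(D/(k-1))*Q ((k-1)/(k*D)) else 0) := by
          intro xh
          rw [hq xh]
          by_cases h : x = xh
          · rw [if_pos h, if_pos h, harg1]; ring
          · rw [if_neg h, if_neg h, harg2]; ring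
        rw [Finset.sum_congr rfl (fun xh _ => hterm xh), Finset.sum_add_distrib,
          Finset.sum_const, Finset.sum_ite_eq, if_pos (Finset.mem_univ x),
          Finset.card_univ, Fintype.card_fin, nsmul_eq_mul, hcdef]
        field_simp
        ring
      rw [Finset.sum_congr rfl (fun x _ => key x), Finset.sum_const,
        Finset.card_univ, Fintype.card_fin, nsmul_eq_mul]
      field_simp
      rw [hkdef]
  -- lower bound
  have hlb : ∀ r ∈ { r : ℝ | ∃ pc : Fin K → Fin K → ℝ,
        (∀ x xh, 0 ≤ pc x xh) ∧ (∀ x, ∑ xh, pc x xh = 1) ∧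
        (∑ x, ∑ xh, (1/k) * pc x xh * (if x = xh then 0 else 1) ≤ D) ∧
        r = ∑ x, ∑ xh ∈ Finset.univ.filter (fun xh => 0 < pc x xh),
            (1/k) * pc x xh * Q ((∑ x', (1/k) * pc x' xh) / pc x xh) }, c ≤ r := by
    rintro r ⟨pc, hnn, hrow, hdist, rfl⟩
    set q : Fin K → ℝ := fun xh => ∑ x', (1/k) * pc x' xh with hqdef
    have hqnn : ∀ xh, 0 ≤ q xh := fun xh =>
      Finset.sum_nonneg (fun x' _ => by have := hnn x' xh; positivity)
    have hqsum : ∑ xh, q xh = 1 := by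
      rw [hqdef]
      rw [Finset.sum_comm]
      have : ∀ x' : Fin K, ∑ xh, (1/k) * pc x' xh = 1/k := by
        intro x'
        rw [← Finset.mul_sum, hrow x', mul_one]
      rw [Finset.sum_congr rfl (fun x' _ => this x'), Finset.sum_const,
        Finset.card_univ, Fintype.card_fin, nsmul_eq_mul]
      field_simp
      exact hkdef.symm
    -- zero-column: each entry vanishes
    have hcol0 : ∀ z : Fin K × Fin K, ¬ 0 < q z.2 → ¬ 0 < (1/k) * pc z.1 z.2 := by
      intro z hz h
      have hq0 : q z.2 = 0 := le_antisymm (not_lt.1 hz) (hqnn z.2)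
      have hle : (1/k) * pc z.1 z.2 ≤ q z.2 :=
        Finset.single_le_sum (f := fun x' => (1/k) * pc x' z.2)
          (fun i _ => by have := hnn i z.2; positivity) (Finset.mem_univ z.1)
      rw [hq0] at hle
      exact absurd (lt_of_lt_of_le h hle) (lt_irrefl 0)
    -- rewrite objective as a sum of perspectives over the product type
    have hre : (∑ x, ∑ xh ∈ Finset.univ.filter (fun xh => 0 < pc x xh),
            (1/k) * pc x xh * Q ((∑ x', (1/k) * pc x' xh) / pc x xh))
        = ∑ z : Fin K × Fin K, pfQ Q ((1/k) * pc z.1 z.2) ((1/k) * q z.2) := by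
      rw [Fintype.sum_prod_type]
      refine Finset.sum_congr rfl (fun x _ => ?_)
      rw [Finset.sum_filter]
      refine Finset.sum_congr rfl (fun xh _ => ?_)
      by_cases h : 0 < pc x xh
      · rw [if_pos h, pfQ_of_pos Q (by positivity)]
        rw [mul_div_mul_left _ _ (by positivity : (0:ℝ) < 1/k).ne']
      · rw [if_neg h, pfQ_of_nonpos Q (fun hh => h (by nlinarith))]
    rw [hre]
    -- split off the zero columns
    rw [← Finset.sum_filter_add_sum_filter_not Finset.univ (fun z : Fin K × Fin K => 0 < q z.2)]
    have hzero : ∑ z ∈ Finset.univ.filter (fun z : Fin K × Fin K => ¬ 0 < q z.2),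
        pfQ Q ((1/k) * pc z.1 z.2) ((1/k) * q z.2) = 0 := by
      refine Finset.sum_eq_zero (fun z hz => ?_)
      exact pfQ_of_nonpos Q (hcol0 z (Finset.mem_filter.1 hz).2) _
    rw [hzero, add_zero]
    -- split diagonal / off-diagonal
    set Spos : Finset (Fin K × Fin K) :=
      Finset.univ.filter (fun z : Fin K × Fin K => 0 < q z.2) with hSpos
    rw [← Finset.sum_filter_add_sum_filter_not Spos (fun z : Fin K × Fin K => z.1 = z.2)]
    set A : Finset (Fin K × Fin K) := Spos.filter (fun z => z.1 = z.2) with hA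
    set B : Finset (Fin K × Fin K) := Spos.filter (fun z => ¬ z.1 = z.2) with hB
    set Pd : ℝ := ∑ z ∈ A, (1/k) * pc z.1 z.2 with hPd
    set Po : ℝ := ∑ z ∈ B, (1/k) * pc z.1 z.2 with hPo
    have hPonn : 0 ≤ Po :=
      Finset.sum_nonneg (fun z _ => by have := hnn z.1 z.2; positivity)
    have hPdnn : 0 ≤ Pd :=
      Finset.sum_nonneg (fun z _ => by have := hnn z.1 z.2; positivity)
    -- Po ≤ D
    have hPoD : Po ≤ D := by
      have hsub : B ⊆ Finset.univ.filter (fun z : Fin K × Fin K => ¬ z.1 = z.2) := by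
        intro z hz
        rw [Finset.mem_filter]
        exact ⟨Finset.mem_univ z, (Finset.mem_filter.1 hz).2⟩
      have h1 : Po ≤ ∑ z ∈ Finset.univ.filter (fun z : Fin K × Fin K => ¬ z.1 = z.2),
          (1/k) * pc z.1 z.2 :=
        Finset.sum_le_sum_of_subset_of_nonneg hsub
          (fun z _ _ => by have := hnn z.1 z.2; positivity)
      have h2 : ∑ z ∈ Finset.univ.filter (fun z : Fin K × Fin K => ¬ z.1 = z.2),
          (1/k) * pc z.1 z.2
          = ∑ x, ∑ xh, (1/k) * pc x xh * (if x = xh then 0 else 1) := by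
        rw [Finset.sum_filter, Fintype.sum_prod_type]
        refine Finset.sum_congr rfl (fun x _ => Finset.sum_congr rfl (fun xh _ => ?_))
        by_cases h : x = xh
        · rw [if_neg (by simpa using h), if_pos h, mul_zero]
        · rw [if_pos (by simpa using h), if_neg h, mul_one]
      linarith [h1, h2 ▸ h1, hdist, h2.symm ▸ hdist]
    -- Pd + Po = 1
    have hPdPo : Pd + Po = 1 := by
      rw [hPd, hPo, Finset.sum_filter_add_sum_filter_not]
      have h1 : ∑ z ∈ Spos, (1/k) * pc z.1 z.2
          = ∑ z : Fin K × Fin K, (1/k) * pc z.1 z.2 := by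
        rw [hSpos, Finset.sum_filter]
        refine Finset.sum_congr rfl (fun z _ => ?_)
        by_cases h : 0 < q z.2
        · rw [if_pos h]
        · rw [if_neg h]
          have h2 := hcol0 z h
          have h3 : 0 ≤ (1/k) * pc z.1 z.2 := by have := hnn z.1 z.2; positivity
          linarith [le_antisymm (not_lt.1 h2) h3]
      rw [h1, Fintype.sum_prod_type]
      have h4 : ∀ x : Fin K, ∑ xh, (1/k) * pc x xh = 1/k := by
        intro x; rw [← Finset.mul_sum, hrow x, mul_one]
      rw [Finset.sum_congr rfl (fun x _ => h4 x), Finset.sum_const,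
        Finset.card_univ, Fintype.card_fin, nsmul_eq_mul]
      field_simp
      exact hkdef.symm
    have hPdpos : 0 < Pd := by linarith
    -- total t-mass of the diagonal part
    have hTd : ∑ z ∈ A, (1/k) * q z.2 = 1/k := by
      rw [hA, hSpos, Finset.filter_filter, Finset.sum_filter, Fintype.sum_prod_type_right]
      have h5 : ∀ xh : Fin K, (∑ x : Fin K,
          if 0 < q xh ∧ x = xh then (1/k) * q xh else 0)
          = (1/k) * q xh := by
        intro xh
        by_cases h : 0 < q xh
        · simp only [h, true_and]
          rw [Finset.sum_ite_eq', if_pos (Finset.mem_univ xh)]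
        · simp only [h, false_and, if_false, Finset.sum_const_zero]
          have : q xh = 0 := le_antisymm (not_lt.1 h) (hqnn xh)
          rw [this, mul_zero]
      rw [Finset.sum_congr rfl (fun xh _ => h5 xh), ← Finset.mul_sum, hqsum, mul_one]
    -- total t-mass of the off-diagonal part
    have hTo : ∑ z ∈ B, (1/k) * q z.2 = (k-1)/k := by
      rw [hB, hSpos, Finset.filter_filter, Finset.sum_filter, Fintype.sum_prod_type_right]
      have h5 : ∀ xh : Fin K, (∑ x : Fin K,
          if 0 < q xh ∧ ¬ x = xh then (1/k) * q xh else 0)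
          = (k - 1) * ((1/k) * q xh) := by
        intro xh
        by_cases h : 0 < q xh
        · simp only [h, true_and]
          have h6 : ∀ x : Fin K, (if ¬ x = xh then (1/k) * q xh else 0)
              = (1/k) * q xh - (if x = xh then (1/k) * q xh else 0) := by
            intro x; by_cases hx : x = xh <;> simp [hx]
          rw [Finset.sum_congr rfl (fun x _ => h6 x), Finset.sum_sub_distrib,
            Finset.sum_const, Finset.sum_ite_eq', if_pos (Finset.mem_univ xh),
            Finset.card_univ, Fintype.card_fin, nsmul_eq_mul]
          ring
        · simp only [h, false_and, if_false, Finset.sum_const_zero]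
          have : q xh = 0 := le_antisymm (not_lt.1 h) (hqnn xh)
          rw [this, mul_zero, mul_zero]
      rw [Finset.sum_congr rfl (fun xh _ => h5 xh), ← Finset.mul_sum, ← Finset.mul_sum,
        hqsum, mul_one, mul_one_div]
    -- Jensen on the diagonal block
    have hJA : pfQ Q Pd (1/k) ≤ ∑ z ∈ A, pfQ Q ((1/k) * pc z.1 z.2) ((1/k) * q z.2) := by
      have := sum_nonneg_sub hQ hQlim A (fun z => (1/k) * pc z.1 z.2) (fun z => (1/k) * q z.2)
        (fun z _ => by have := hnn z.1 z.2; positivity)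
        (fun z hz => by
          have h7 : 0 < q z.2 := (Finset.mem_filter.1 ((Finset.mem_filter.1 hz).1)).2
          positivity)
        (by rw [← hPd]; exact hPdpos)
      rw [← hPd, hTd] at this
      rw [pfQ_of_pos Q hPdpos]
      exact this
    -- Jensen on the off-diagonal block
    have hJB : pfQ Q Po ((k-1)/k) ≤ ∑ z ∈ B, pfQ Q ((1/k) * pc z.1 z.2) ((1/k) * q z.2) := by
      rcases hPonn.lt_or_eq with hPopos | hPo0
      · have := sum_nonneg_sub hQ hQlim B (fun z => (1/k) * pc z.1 z.2) (fun z => (1/k) * q z.2)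
          (fun z _ => by have := hnn z.1 z.2; positivity)
          (fun z hz => by
            have h7 : 0 < q z.2 := (Finset.mem_filter.1 ((Finset.mem_filter.1 hz).1)).2
            positivity)
          (by rw [← hPo]; exact hPopos)
        rw [← hPo, hTo] at this
        rw [pfQ_of_pos Q hPopos]
        exact this
      · rw [pfQ_of_nonpos Q (by rw [← hPo0]; exact lt_irrefl 0)]
        refine Finset.sum_nonneg (fun z hz => ?_)
        have hnnB : ∀ z ∈ B, 0 ≤ (1/k) * pc z.1 z.2 := fun z _ => by
          have := hnn z.1 z.2; positivity
        have hz0 : (1/k) * pc z.1 z.2 = 0 :=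
          (Finset.sum_eq_zero_iff_of_nonneg hnnB).1 hPo0.symm z hz
        rw [hz0, pfQ_of_nonpos Q (lt_irrefl 0)]
    -- assemble
    have hcg : c = pfQ Q (1 - D) (1/k) + pfQ Q D ((k-1)/k) := by
      rw [pfQ_of_pos Q h1D, pfQ_of_pos Q hD0, hcdef, harg1.symm, div_div]
      rw [div_div]
    have hmono := g_mono hQ hQlim hk2 hPonn hPoD hD1
    have hPdeq : Pd = 1 - Po := by linarith
    calc c = pfQ Q (1 - D) (1/k) + pfQ Q D ((k-1)/k) := hcg
      _ ≤ pfQ Q (1 - Po) (1/k) + pfQ Q Po ((k-1)/k) := hmono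
      _ = pfQ Q Pd (1/k) + pfQ Q Po ((k-1)/k) := by rw [hPdeq]
      _ ≤ (∑ z ∈ A, pfQ Q ((1/k) * pc z.1 z.2) ((1/k) * q z.2))
          + ∑ z ∈ B, pfQ Q ((1/k) * pc z.1 z.2) ((1/k) * q z.2) := add_le_add hJA hJB
  exact le_antisymm (csInf_le ⟨c, fun r hr => hlb r hr⟩ hmem) (le_csInf ⟨c, hmem⟩ hlb)
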